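/- Suppose a sequence of nonnegative reals (F_k) satisfies F_{k+1} ≤ F_k − c w_k a_k + C₁ w_k / (k+1)^{1/4} + C₂ w_k², where w_k = η/(k+1)^{3/4}, c, C₁, C₂, η > 0, F_k ≥ F* for all k, and a_k ≥ 0. Then min_{0 ≤ k < K} a_k = O(log K / K^{1/4}) as K → ∞; explicitly, min_{0 ≤ k < K} a_k ≤ [F₀ − F* + C₁ η (1 + log K) + C₂ η² ζ(3/2)] / (4 c η ((K+1)^{1/4} − 1)) for K ≥ 2. -/

import Mathlib

open Finset Real

lemma harmonic_le (K : ℕ) (hK : 1 ≤ K) :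
    ∑ k ∈ Finset.range K, 1 / ((k : ℝ) + 1) ≤ 1 + Real.log K := by
  induction K, hK using Nat.le_induction with
  | base => simp
  | succ n hn ih =>
    rw [Finset.sum_range_succ]
    have hn0 : (0:ℝ) < n := by exact_mod_cast hn
    have h1 : Real.log ((n:ℝ) / ((n:ℝ)+1)) ≤ (n:ℝ)/((n:ℝ)+1) - 1 :=
      Real.log_le_sub_one_of_pos (by positivity)
    have h2 : Real.log ((n:ℝ)/((n:ℝ)+1)) = Real.log n - Real.log ((n:ℝ)+1) :=
      Real.log_div (ne_of_gt hn0) (by positivity)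
    have h3 : (n:ℝ)/((n:ℝ)+1) - 1 = -(1/((n:ℝ)+1)) := by field_simp; ring
    rw [h2, h3] at h1
    push_cast
    linarith

lemma rpow_quarter_diff (x : ℝ) (hx : 1 ≤ x) :
    4 * ((x + 1) ^ ((1:ℝ)/4) - x ^ ((1:ℝ)/4)) ≤ 1 / x ^ ((3:ℝ)/4) := by
  have hx0 : (0:ℝ) < x := by linarith
  set u := x ^ ((1:ℝ)/4) with hu
  set v := (x + 1) ^ ((1:ℝ)/4) with hv
  have hu1 : 1 ≤ u := Real.one_le_rpow hx (by norm_num)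
  have huv : u ≤ v := Real.rpow_le_rpow hx0.le (by linarith) (by norm_num)
  have hu4 : u ^ (4:ℕ) = x := by
    rw [hu, ← Real.rpow_natCast (x ^ ((1:ℝ)/4)), ← Real.rpow_mul hx0.le]; norm_num
  have hv4 : v ^ (4:ℕ) = x + 1 := by
    rw [hv, ← Real.rpow_natCast ((x+1) ^ ((1:ℝ)/4)), ← Real.rpow_mul (by linarith)]; norm_num
  have hu3 : u ^ (3:ℕ) = x ^ ((3:ℝ)/4) := by
    rw [hu, ← Real.rpow_natCast (x ^ ((1:ℝ)/4)), ← Real.rpow_mul hx0.le]; norm_num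
  have hkey : (v - u) * (4 * u^3) ≤ (v - u) * (v^3 + v^2*u + v*u^2 + u^3) := by
    apply mul_le_mul_of_nonneg_left _ (by linarith)
    nlinarith [sub_nonneg.2 huv, hu1, sq_nonneg (v - u), sq_nonneg (v + u),
      mul_nonneg (sub_nonneg.2 huv) (sq_nonneg u),
      mul_nonneg (sub_nonneg.2 huv) (sq_nonneg v)]
  have h1 : (v - u) * (4 * u^3) ≤ 1 := by
    have : (v - u) * (v^3 + v^2*u + v*u^2 + u^3) = v^(4:ℕ) - u^(4:ℕ) := by ring
    rw [this, hv4, hu4] at hkey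
    linarith
  rw [← hu3]
  rw [le_div_iff₀ (by positivity)]
  push_cast
  nlinarith [h1]

lemma sum_rpow_lower (K : ℕ) :
    4 * (((K:ℝ)+1) ^ ((1:ℝ)/4) - 1) ≤ ∑ k ∈ Finset.range K, 1/((k:ℝ)+1) ^ ((3:ℝ)/4) := by
  induction K with
  | zero => norm_num
  | succ n ih =>
    rw [Finset.sum_range_succ]
    have h := rpow_quarter_diff ((n:ℝ)+1) (by linarith [Nat.cast_nonneg (α := ℝ) n])
    push_cast
    linarith

lemma zeta_summable : Summable (fun n : ℕ => 1 / ((n:ℝ)+1) ^ ((3:ℝ)/2)) := by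
  have h := (summable_nat_add_iff (f := fun n : ℕ => 1 / (n:ℝ) ^ ((3:ℝ)/2)) 1).2
    (Real.summable_one_div_nat_rpow.2 (by norm_num))
  simpa using h

lemma zeta_re_eq : (riemannZeta ((3:ℂ)/2)).re = ∑' n : ℕ, 1 / ((n:ℝ)+1) ^ ((3:ℝ)/2) := by
  rw [zeta_eq_tsum_one_div_nat_add_one_cpow (by norm_num : 1 < ((3:ℂ)/2).re)]
  have h : ∀ n : ℕ, 1 / ((n:ℂ)+1) ^ ((3:ℂ)/2) = ((1 / ((n:ℝ)+1) ^ ((3:ℝ)/2) : ℝ) : ℂ) := by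
    intro n
    rw [show ((3:ℂ)/2) = (((3:ℝ)/2 : ℝ) : ℂ) by norm_num,
        show ((n:ℂ)+1) = (((n:ℝ)+1 : ℝ) : ℂ) by push_cast; ring,
        ← Complex.ofReal_cpow (by positivity)]
    push_cast
    ring
  rw [tsum_congr h, ← Complex.ofReal_tsum, Complex.ofReal_re]

theorem abstract_convergence (F a : ℕ → ℝ) (Fstar c C₁ C₂ η : ℝ)
    (hc : 0 < c) (hC₁ : 0 < C₁) (hC₂ : 0 < C₂) (hη : 0 < η)
    (hFstar : ∀ k, Fstar ≤ F k) (ha : ∀ k, 0 ≤ a k)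
    (hrec : ∀ k : ℕ,
      F (k + 1) ≤ F k - c * (η / ((k : ℝ) + 1) ^ ((3 : ℝ) / 4)) * a k
        + C₁ * (η / ((k : ℝ) + 1) ^ ((3 : ℝ) / 4)) / ((k : ℝ) + 1) ^ ((1 : ℝ) / 4)
        + C₂ * (η / ((k : ℝ) + 1) ^ ((3 : ℝ) / 4)) ^ 2) :
    ∀ K : ℕ, 2 ≤ K → ∃ k ∈ Finset.range K,
      a k ≤ (F 0 - Fstar + C₁ * η * (1 + Real.log K)
              + C₂ * η ^ 2 * (riemannZeta ((3 : ℂ) / 2)).re)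
            / (4 * c * η * (((K : ℝ) + 1) ^ ((1 : ℝ) / 4) - 1)) := by
  have step : ∀ k : ℕ, c * η * (a k / ((k:ℝ)+1) ^ ((3:ℝ)/4)) ≤
      F k - F (k+1) + C₁ * η * (1/((k:ℝ)+1)) + C₂ * η^2 * (1/((k:ℝ)+1) ^ ((3:ℝ)/2)) := by
    intro k
    have ht : (0:ℝ) < (k:ℝ)+1 := by positivity
    have hmul : ((k:ℝ)+1)^((3:ℝ)/4) * ((k:ℝ)+1)^((1:ℝ)/4) = (k:ℝ)+1 := by
      rw [← Real.rpow_add ht]; norm_num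
    have e1 : C₁ * (η / ((k:ℝ)+1)^((3:ℝ)/4)) / ((k:ℝ)+1)^((1:ℝ)/4)
        = C₁ * η * (1/((k:ℝ)+1)) := by
      rw [mul_div_assoc, div_div, hmul]; ring
    have hsq : (((k:ℝ)+1)^((3:ℝ)/4))^(2:ℕ) = ((k:ℝ)+1)^((3:ℝ)/2) := by
      rw [← Real.rpow_natCast (((k:ℝ)+1)^((3:ℝ)/4)), ← Real.rpow_mul ht.le]; norm_num
    have e2 : C₂ * (η / ((k:ℝ)+1)^((3:ℝ)/4))^2 = C₂ * η^2 * (1/((k:ℝ)+1)^((3:ℝ)/2)) := by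
      rw [div_pow, hsq]; ring
    have e3 : c * (η / ((k:ℝ)+1)^((3:ℝ)/4)) * a k
        = c * η * (a k / ((k:ℝ)+1)^((3:ℝ)/4)) := by ring
    have h := hrec k
    rw [e1, e2, e3] at h
    linarith
  intro K hK
  obtain ⟨k0, hk0mem, hk0min⟩ := Finset.exists_min_image (Finset.range K) a
    ⟨0, Finset.mem_range.2 (by omega)⟩
  refine ⟨k0, hk0mem, ?_⟩
  have hD : (0:ℝ) < ((K:ℝ)+1) ^ ((1:ℝ)/4) - 1 := by
    have h2K : (2:ℝ) ≤ K := by exact_mod_cast hK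
    have : (1:ℝ) < ((K:ℝ)+1) ^ ((1:ℝ)/4) :=
      (Real.one_lt_rpow_iff_of_pos (by positivity)).2 (Or.inl ⟨by linarith, by norm_num⟩)
    linarith
  -- telescoped inequality
  have hsum : ∑ k ∈ Finset.range K, (c * η * (a k / ((k:ℝ)+1) ^ ((3:ℝ)/4))) ≤
      ∑ k ∈ Finset.range K, (F k - F (k+1) + C₁ * η * (1/((k:ℝ)+1))
        + C₂ * η^2 * (1/((k:ℝ)+1) ^ ((3:ℝ)/2))) :=
    Finset.sum_le_sum fun k _ => step k
  rw [Finset.sum_add_distrib, Finset.sum_add_distrib, Finset.sum_range_sub' F,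
    ← Finset.mul_sum, ← Finset.mul_sum, ← Finset.mul_sum] at hsum
  have hH : ∑ k ∈ Finset.range K, 1 / ((k:ℝ)+1) ≤ 1 + Real.log K :=
    harmonic_le K (by omega)
  have hZ : ∑ k ∈ Finset.range K, 1/((k:ℝ)+1) ^ ((3:ℝ)/2) ≤ (riemannZeta ((3:ℂ)/2)).re := by
    rw [zeta_re_eq]
    exact Summable.sum_le_tsum _ (fun k _ => by positivity) zeta_summable
  have hFK : F 0 - F K ≤ F 0 - Fstar := by linarith [hFstar K]
  -- lower bound on weighted min
  have hlow : a k0 * (4 * (((K:ℝ)+1) ^ ((1:ℝ)/4) - 1)) ≤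
      ∑ k ∈ Finset.range K, (a k / ((k:ℝ)+1) ^ ((3:ℝ)/4)) := by
    calc a k0 * (4 * (((K:ℝ)+1) ^ ((1:ℝ)/4) - 1))
        ≤ a k0 * ∑ k ∈ Finset.range K, 1/((k:ℝ)+1) ^ ((3:ℝ)/4) :=
          mul_le_mul_of_nonneg_left (sum_rpow_lower K) (ha k0)
      _ ≤ ∑ k ∈ Finset.range K, (a k / ((k:ℝ)+1) ^ ((3:ℝ)/4)) := by
          rw [Finset.mul_sum]
          refine Finset.sum_le_sum fun k hk => ?_
          rw [mul_one_div]
          gcongr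
          exact hk0min k hk
  have hcombine : c * η * (a k0 * (4 * (((K:ℝ)+1) ^ ((1:ℝ)/4) - 1))) ≤
      F 0 - Fstar + C₁ * η * (1 + Real.log K)
        + C₂ * η ^ 2 * (riemannZeta ((3:ℂ)/2)).re := by
    have h1 := mul_le_mul_of_nonneg_left hlow (by positivity : (0:ℝ) ≤ c * η)
    have h2 : C₁ * η * ∑ k ∈ Finset.range K, 1/((k:ℝ)+1) ≤ C₁ * η * (1 + Real.log K) :=
      mul_le_mul_of_nonneg_left hH (by positivity)
    have h3 : C₂ * η^2 * ∑ k ∈ Finset.range K, 1/((k:ℝ)+1) ^ ((3:ℝ)/2)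
        ≤ C₂ * η^2 * (riemannZeta ((3:ℂ)/2)).re := mul_le_mul_of_nonneg_left hZ (by positivity)
    linarith
  rw [le_div_iff₀ (by positivity)]
  nlinarith [hcombine]
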